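/- Let κ be a (p,q)-tensor field and π a (q,p)-tensor field density on a smooth manifold M, let ζ be a vector field on M, and let ∇ be a torsion-free covariant derivative. Then the full contraction of the Lie derivative satisfies ℒ_ζκ : π = ∇_ζκ : π − div^∇(π∴κ̂)·ζ + div((π∴κ̂)·ζ), where the last divergence is the canonical divergence of a vector field density. Equivalently, in local coordinates, (ℒ_ζκ)^{α₁…α_p}_{β₁…β_q} π_{α₁…α_p}^{β₁…β_q} = ζ^μ( ∂_μκ^{α₁…α_p}_{β₁…β_q} π_{α₁…α_p}^{β₁…β_q} − ∂_ν( κ̂^{α₁…α_p ν}_{β₁…β_q μ} π_{α₁…α_p}^{β₁…β_q} ) ) + ∂_ν( κ̂^{α₁…α_p ν}_{β₁…β_q μ} π_{α₁…α_p}^{β₁…β_q} ζ^μ ), and the same formula holds with every ∂ replaced by ∇. -/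

import Mathlib

/-!
Statement 0 (Lemma 4.1 / "technical lemma" of the paper, local-coordinate form).

We work in a local chart of the smooth manifold `M`, with points given by their
coordinates in `Fin d → ℝ`.  A `(p,q)`-tensor field (or tensor field density) is
represented by its components `κ x α β = κ^{α₁…α_p}_{β₁…β_q}(x)`, where
`α : Fin p → Fin d` lists the contravariant indices and `β : Fin q → Fin d` the
covariant ones.  A `(q,p)`-tensor field density `π` is represented by its
components `π x α β = π_{α₁…α_p}^{β₁…β_q}(x)` (indices complementary to those of
`κ`).  Partial derivatives are genuine derivatives (`fderiv`) in the chart.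

The theorem is the coordinate identity
`(ℒ_ζκ) : π = ζ^μ( ∂_μκ : π − ∂_ν((π∴κ̂)^ν_μ) ) + ∂_ν((π∴κ̂)^ν_μ ζ^μ)`,
where `κ̂` is the hat tensor and `(π∴κ̂)^ν_μ` the contraction of all indices of
`κ̂` with the corresponding indices of `π` except the last contravariant and
covariant indices of `κ̂`.  This is the local form of the global formula
`ℒ_ζκ : π = ∇_ζκ : π − div^∇(π∴κ̂)·ζ + div((π∴κ̂)·ζ)` for any torsion-free
covariant derivative `∇`.
-/

open scoped BigOperators

namespace GRContinua

variable {d p q : ℕ}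

/-- Points of a local chart of the manifold. -/
abbrev Pt (d : ℕ) := Fin d → ℝ

/-- Components of a `(p,q)`-tensor field (or tensor field density) in the chart. -/
abbrev Tensor (d p q : ℕ) := Pt d → (Fin p → Fin d) → (Fin q → Fin d) → ℝ

/-- Partial derivative `∂_μ f` of a scalar function in the chart. -/
noncomputable def pd (μ : Fin d) (f : Pt d → ℝ) (x : Pt d) : ℝ :=
  fderiv ℝ f x (Pi.single μ 1)

/-- The hat tensor `κ̂` of a `(p,q)`-tensor field `κ`:
`κ̂^{α₁…α_p ν}_{β₁…β_q μ}
  = Σ_r ( κ^{α₁…α_p}_{β₁…β_{r−1} μ β_{r+1}…β_q} δ^ν_{β_r}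
        − κ^{α₁…α_{r−1} ν α_{r+1}…α_p}_{β₁…β_q} δ^{α_r}_μ )`. -/
def hatTensor (κ : Tensor d p q) (x : Pt d) (α : Fin p → Fin d) (ν : Fin d)
    (β : Fin q → Fin d) (μ : Fin d) : ℝ :=
  (∑ r : Fin q, κ x α (Function.update β r μ) * (if ν = β r then 1 else 0))
    - ∑ r : Fin p, κ x (Function.update α r ν) β * (if α r = μ then 1 else 0)

/-- Coordinate expression of the Lie derivative `ℒ_ζ κ` of a `(p,q)`-tensor field:
`(ℒ_ζκ)^{α}_{β} = ζ^γ ∂_γ κ^{α}_{β} + κ̂^{α a}_{β b} ∂_a ζ^b`. -/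
noncomputable def lieDeriv (ζ : Pt d → Fin d → ℝ) (κ : Tensor d p q) : Tensor d p q :=
  fun x α β =>
    (∑ γ : Fin d, ζ x γ * pd γ (fun y => κ y α β) x)
      + ∑ a : Fin d, ∑ b : Fin d, hatTensor κ x α a β b * pd a (fun y => ζ y b) x

/-- `(π ∴ κ̂)^ν_μ` : the `(1,1)`-tensor field density obtained by contracting all of
the indices of `κ̂` with the corresponding indices of `π`, except the last
contravariant and covariant indices of `κ̂`. -/
def hatContr (κ π : Tensor d p q) (x : Pt d) (ν μ : Fin d) : ℝ :=
  ∑ α : Fin p → Fin d, ∑ β : Fin q → Fin d, hatTensor κ x α ν β μ * π x α β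

/-- Full contraction `κ : π` of a `(p,q)`-tensor field with a `(q,p)`-tensor field
density. -/
def fullContr (κ π : Tensor d p q) (x : Pt d) : ℝ :=
  ∑ α : Fin p → Fin d, ∑ β : Fin q → Fin d, κ x α β * π x α β


private lemma pd_sum {d : ℕ} {ι : Type*} (s : Finset ι) (f : ι → Pt d → ℝ) (μ : Fin d)
    (x : Pt d) (hf : ∀ i ∈ s, DifferentiableAt ℝ (f i) x) :
    pd μ (fun y => ∑ i ∈ s, f i y) x = ∑ i ∈ s, pd μ (f i) x := by
  simp only [pd, fderiv_fun_sum hf, ContinuousLinearMap.coe_sum', Finset.sum_apply]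

private lemma pd_mul {d : ℕ} (f g : Pt d → ℝ) (μ : Fin d) (x : Pt d)
    (hf : DifferentiableAt ℝ f x) (hg : DifferentiableAt ℝ g x) :
    pd μ (fun y => f y * g y) x = f x * pd μ g x + g x * pd μ f x := by
  simp only [pd, fderiv_fun_mul hf hg, ContinuousLinearMap.add_apply,
    ContinuousLinearMap.smul_apply, smul_eq_mul]

private lemma sum_comm3 {ι₁ ι₂ ι₃ : Type*} [Fintype ι₁] [Fintype ι₂] [Fintype ι₃]
    (f : ι₁ → ι₂ → ι₃ → ℝ) :
    ∑ a : ι₁, ∑ b : ι₂, ∑ c : ι₃, f a b c = ∑ c : ι₃, ∑ a : ι₁, ∑ b : ι₂, f a b c := by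
  have h : ∀ a : ι₁, ∑ b : ι₂, ∑ c : ι₃, f a b c = ∑ c : ι₃, ∑ b : ι₂, f a b c :=
    fun a => Finset.sum_comm
  simp_rw [h]
  exact Finset.sum_comm

private lemma sum_swap4 {ι₁ ι₂ ι₃ ι₄ : Type*} [Fintype ι₁] [Fintype ι₂] [Fintype ι₃]
    [Fintype ι₄] (f : ι₁ → ι₂ → ι₃ → ι₄ → ℝ) :
    ∑ a : ι₁, ∑ b : ι₂, ∑ c : ι₃, ∑ e : ι₄, f a b c e
      = ∑ c : ι₃, ∑ e : ι₄, ∑ a : ι₁, ∑ b : ι₂, f a b c e := by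
  rw [sum_comm3 (fun a b c => ∑ e : ι₄, f a b c e)]
  exact Finset.sum_congr rfl fun c _ => sum_comm3 _

/-- For a `(p,q)`-tensor field `κ`, a `(q,p)`-tensor field density
`π` and a vector field `ζ` (all with differentiable components), the full
contraction of the Lie derivative satisfies, at every point `x`,
`(ℒ_ζκ) : π = ζ^μ( ∂_μκ : π − ∂_ν((π∴κ̂)^ν_μ) ) + ∂_ν((π∴κ̂)^ν_μ ζ^μ)`,
the local-coordinate form of
`ℒ_ζκ : π = ∇_ζκ : π − div^∇(π∴κ̂)·ζ + div((π∴κ̂)·ζ)`. -/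
theorem lieDeriv_fullContr_divergence_identity
    (κ π : Tensor d p q) (ζ : Pt d → Fin d → ℝ)
    (hκ : ∀ α β, Differentiable ℝ fun x => κ x α β)
    (hπ : ∀ α β, Differentiable ℝ fun x => π x α β)
    (hζ : ∀ b, Differentiable ℝ fun x => ζ x b) :
    ∀ x : Pt d,
      fullContr (lieDeriv ζ κ) π x
        =
      (∑ μ : Fin d, ζ x μ *
          ((∑ α : Fin p → Fin d, ∑ β : Fin q → Fin d,
              pd μ (fun y => κ y α β) x * π x α β)
            - ∑ ν : Fin d, pd ν (fun y => hatContr κ π y ν μ) x))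
        + ∑ ν : Fin d, pd ν (fun y => ∑ μ : Fin d, hatContr κ π y ν μ * ζ y μ) x := by
  intro x
  have hhat : ∀ α ν β μ, Differentiable ℝ fun y => hatTensor κ y α ν β μ := by
    intro α ν β μ
    simp only [hatTensor]
    exact (Differentiable.fun_sum fun r _ => (hκ _ _).mul_const _).sub
      (Differentiable.fun_sum fun r _ => (hκ _ _).mul_const _)
  have hhc : ∀ ν μ, Differentiable ℝ fun y => hatContr κ π y ν μ := by
    intro ν μ
    simp only [hatContr]
    exact Differentiable.fun_sum fun α _ => Differentiable.fun_sum fun β _ =>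
      (hhat α ν β μ).mul (hπ α β)
  have hT2 : (∑ ν : Fin d, pd ν (fun y => ∑ μ : Fin d, hatContr κ π y ν μ * ζ y μ) x)
      = (∑ ν : Fin d, ∑ μ : Fin d, hatContr κ π x ν μ * pd ν (fun y => ζ y μ) x)
        + ∑ ν : Fin d, ∑ μ : Fin d, ζ x μ * pd ν (fun y => hatContr κ π y ν μ) x := by
    rw [← Finset.sum_add_distrib]
    refine Finset.sum_congr rfl fun ν _ => ?_
    rw [pd_sum (f := fun μ y => hatContr κ π y ν μ * ζ y μ) _ _ _ (fun μ _ => ((hhc ν μ).mul (hζ μ)) x), ← Finset.sum_add_distrib]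
    exact Finset.sum_congr rfl fun μ _ => pd_mul _ _ _ _ (hhc ν μ x) (hζ μ x)
  have hL : fullContr (lieDeriv ζ κ) π x
      = (∑ μ : Fin d, ζ x μ * ∑ α : Fin p → Fin d, ∑ β : Fin q → Fin d,
            pd μ (fun y => κ y α β) x * π x α β)
        + ∑ a : Fin d, ∑ b : Fin d, hatContr κ π x a b * pd a (fun y => ζ y b) x := by
    simp only [fullContr, lieDeriv, hatContr, add_mul, Finset.sum_mul, Finset.mul_sum,
      Finset.sum_add_distrib]
    congr 1
    · rw [sum_comm3 (fun (α : Fin p → Fin d) (β : Fin q → Fin d) (γ : Fin d) =>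
        ζ x γ * pd γ (fun y => κ y α β) x * π x α β)]
      exact Finset.sum_congr rfl fun _ _ => Finset.sum_congr rfl fun _ _ =>
        Finset.sum_congr rfl fun _ _ => by ring
    · rw [sum_swap4 (fun (α : Fin p → Fin d) (β : Fin q → Fin d) (a b : Fin d) =>
        hatTensor κ x α a β b * pd a (fun y => ζ y b) x * π x α β)]
      exact Finset.sum_congr rfl fun _ _ => Finset.sum_congr rfl fun _ _ =>
        Finset.sum_congr rfl fun _ _ => Finset.sum_congr rfl fun _ _ => by ring
  have hC : (∑ μ : Fin d, ∑ ν : Fin d, ζ x μ * pd ν (fun y => hatContr κ π y ν μ) x)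
      = ∑ ν : Fin d, ∑ μ : Fin d, ζ x μ * pd ν (fun y => hatContr κ π y ν μ) x :=
    Finset.sum_comm
  have hT1 : (∑ μ : Fin d, ζ x μ *
        ((∑ α : Fin p → Fin d, ∑ β : Fin q → Fin d,
            pd μ (fun y => κ y α β) x * π x α β)
          - ∑ ν : Fin d, pd ν (fun y => hatContr κ π y ν μ) x))
      = (∑ μ : Fin d, ζ x μ * ∑ α : Fin p → Fin d, ∑ β : Fin q → Fin d,
            pd μ (fun y => κ y α β) x * π x α β)
        - ∑ μ : Fin d, ∑ ν : Fin d, ζ x μ * pd ν (fun y => hatContr κ π y ν μ) x := by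
    rw [← Finset.sum_sub_distrib]
    exact Finset.sum_congr rfl fun μ _ => by rw [mul_sub, Finset.mul_sum, Finset.mul_sum]
  rw [hL, hT2, hT1, hC]
  ring


end GRContinua
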